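/- For any integer s > 2 and any sequence (c_k) with c_k ∈ {1,...,s-1}, the series Σ_{k=1}^∞ c_k / s^{c_1+c_2+⋯+c_k} converges to a real number in the interval [(s-1)/(s^{s-1}-1), 1/(s-1)]. -/

import Mathlib

open Finset

/-- The term of the series: `c n / s ^ (c 1 + ... + c (n+1))` (0-indexed). -/
noncomputable def sTerm (s : ℕ) (c : ℕ → ℕ) (n : ℕ) : ℝ :=
  (c n : ℝ) / (s : ℝ) ^ (∑ k ∈ Finset.range (n + 1), c k)

/-- `x = Σ_{k=1}^∞ c_k / s^{c_1+⋯+c_k}`. -/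
noncomputable def sVal (s : ℕ) (c : ℕ → ℕ) : ℝ := ∑' n : ℕ, sTerm s c n

/-- The sequence `(c_k)` has all terms in `{1, ..., s-1}`. -/
def sValid (s : ℕ) (c : ℕ → ℕ) : Prop := ∀ k, 1 ≤ c k ∧ c k ≤ s - 1

/-- The set `S_{(s,0)}`. -/
def Sset (s : ℕ) : Set ℝ := { x | ∃ c : ℕ → ℕ, sValid s c ∧ x = sVal s c }

/-- The cylinder `Δ'_{c_1 ... c_n}` of rank `n` with base the first `n` terms of `c`. -/
def cyl (s n : ℕ) (c : ℕ → ℕ) : Set ℝ :=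
  { x | ∃ c' : ℕ → ℕ, sValid s c' ∧ (∀ k < n, c' k = c k) ∧ x = sVal s c' }

/-- The cylinder `Δ'_{c_1 ... c_n p}`: prefix of length `n` from `c`, next digit `p`. -/
def cylExt (s n : ℕ) (c : ℕ → ℕ) (p : ℕ) : Set ℝ :=
  { x | ∃ c' : ℕ → ℕ, sValid s c' ∧ (∀ k < n, c' k = c k) ∧ c' n = p ∧ x = sVal s c' }

/-- `g_n = Σ_{k=1}^n c_k / s^{c_1+⋯+c_k}`. -/
noncomputable def gPart (s n : ℕ) (c : ℕ → ℕ) : ℝ := ∑ k ∈ Finset.range n, sTerm s c k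

lemma nat_key {s c d : ℕ} (hs : 2 ≤ s) (hc : 1 ≤ c) (hcd : c ≤ d) :
    d * s ^ c ≤ c * s ^ d := by
  induction d, hcd using Nat.le_induction with
  | base => exact le_refl _
  | succ d hd ih =>
    have h1 : 1 ≤ d := hc.trans hd
    have h2 : d + 1 ≤ s * d := by nlinarith
    calc (d + 1) * s ^ c ≤ (s * d) * s ^ c := Nat.mul_le_mul_right _ h2
      _ = s * (d * s ^ c) := by ring
      _ ≤ s * (c * s ^ d) := Nat.mul_le_mul_left _ ih
      _ = c * s ^ (d + 1) := by ring

lemma real_mono {s c d : ℕ} (hs : 2 ≤ s) (hc : 1 ≤ c) (hcd : c ≤ d) :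
    (d : ℝ) / (s : ℝ) ^ d ≤ (c : ℝ) / (s : ℝ) ^ c := by
  have hsp : (0:ℝ) < s := by positivity
  rw [div_le_div_iff₀ (by positivity) (by positivity)]
  exact_mod_cast nat_key hs hc hcd

theorem stmt0 (s : ℕ) (hs : 2 < s) (c : ℕ → ℕ) (hc : sValid s c) :
    Summable (sTerm s c) ∧
      sVal s c ∈ Set.Icc (((s : ℝ) - 1) / ((s : ℝ) ^ (s - 1) - 1)) (1 / ((s : ℝ) - 1)) := by
  have hsp : (0:ℝ) < s := by positivity
  have hs1 : (1:ℝ) < s := by exact_mod_cast (by omega : 1 < s)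
  have hBl : ∀ n, n ≤ ∑ k ∈ Finset.range n, c k := by
    intro n
    calc n = ∑ _k ∈ Finset.range n, 1 := by simp
      _ ≤ _ := Finset.sum_le_sum (fun i _ => (hc i).1)
  have hBu : ∀ n, ∑ k ∈ Finset.range n, c k ≤ n * (s - 1) := by
    intro n
    calc ∑ k ∈ Finset.range n, c k ≤ ∑ _k ∈ Finset.range n, (s - 1) :=
          Finset.sum_le_sum (fun i _ => (hc i).2)
      _ = n * (s - 1) := by simp [mul_comm]
  set r₁ : ℝ := (s:ℝ)⁻¹ with hr₁
  set r₂ : ℝ := ((s:ℝ) ^ (s - 1))⁻¹ with hr₂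
  have hr₁0 : 0 ≤ r₁ := by positivity
  have hr₁1 : r₁ < 1 := by rw [hr₁, inv_lt_one_iff₀]; right; exact hs1
  have hpow1 : (1:ℝ) < (s:ℝ) ^ (s - 1) := one_lt_pow₀ hs1 (by omega)
  have hr₂0 : 0 ≤ r₂ := by positivity
  have hr₂1 : r₂ < 1 := by rw [hr₂, inv_lt_one_iff₀]; right; exact hpow1
  -- termwise decomposition
  have hsplit : ∀ n, sTerm s c n =
      ((c n : ℝ) / (s:ℝ) ^ (c n)) * (((s:ℝ) ^ (∑ k ∈ Finset.range n, c k))⁻¹) := by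
    intro n
    rw [sTerm, Finset.sum_range_succ, pow_add, div_mul_eq_div_div_swap, div_eq_mul_inv]
  have hub : ∀ n, sTerm s c n ≤ r₁ ^ (n + 1) := by
    intro n
    rw [hsplit n]
    have h1 : (c n : ℝ) / (s:ℝ) ^ (c n) ≤ (1:ℝ) / (s:ℝ) ^ 1 := by
      have := real_mono (s := s) (c := 1) (d := c n) (by omega) le_rfl (hc n).1
      simpa using this
    have h2 : ((s:ℝ) ^ (∑ k ∈ Finset.range n, c k))⁻¹ ≤ ((s:ℝ) ^ n)⁻¹ := by
      apply inv_anti₀ (by positivity)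
      exact pow_le_pow_right₀ hs1.le (hBl n)
    calc ((c n : ℝ) / (s:ℝ) ^ (c n)) * (((s:ℝ) ^ (∑ k ∈ Finset.range n, c k))⁻¹)
        ≤ ((1:ℝ) / (s:ℝ) ^ 1) * ((s:ℝ) ^ n)⁻¹ := by
          apply mul_le_mul h1 h2 (by positivity) (by positivity)
      _ = r₁ ^ (n + 1) := by rw [hr₁, inv_pow, pow_succ]; field_simp; ring
  have hlb : ∀ n, ((s:ℝ) - 1) * r₂ ^ (n + 1) ≤ sTerm s c n := by
    intro n
    rw [hsplit n]
    have hcast : ((s - 1 : ℕ) : ℝ) = (s:ℝ) - 1 := by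
      have : 1 ≤ s := by omega
      push_cast [this]; ring
    have h1 : ((s:ℝ) - 1) / (s:ℝ) ^ (s - 1) ≤ (c n : ℝ) / (s:ℝ) ^ (c n) := by
      have := real_mono (s := s) (c := c n) (d := s - 1) (by omega) (hc n).1 (hc n).2
      rwa [hcast] at this
    have h2 : ((s:ℝ) ^ (n * (s - 1)))⁻¹ ≤ ((s:ℝ) ^ (∑ k ∈ Finset.range n, c k))⁻¹ := by
      apply inv_anti₀ (by positivity)
      exact pow_le_pow_right₀ hs1.le (hBu n)
    calc ((s:ℝ) - 1) * r₂ ^ (n + 1)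
        = (((s:ℝ) - 1) / (s:ℝ) ^ (s - 1)) * ((s:ℝ) ^ (n * (s - 1)))⁻¹ := by
          rw [hr₂, pow_succ, inv_pow, pow_mul]; ring
      _ ≤ ((c n : ℝ) / (s:ℝ) ^ (c n)) * (((s:ℝ) ^ (∑ k ∈ Finset.range n, c k))⁻¹) := by
          apply mul_le_mul h1 h2 (by positivity)
          positivity
  have hnn : ∀ n, 0 ≤ sTerm s c n := by
    intro n; rw [sTerm]; positivity
  have hg1 : Summable (fun n : ℕ => r₁ ^ (n + 1)) := by
    simpa [pow_succ] using (summable_geometric_of_lt_one hr₁0 hr₁1).mul_right r₁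
  have hsum : Summable (sTerm s c) := Summable.of_nonneg_of_le hnn hub hg1
  refine ⟨hsum, ?_, ?_⟩
  · -- lower bound
    have hg2 : Summable (fun n : ℕ => ((s:ℝ) - 1) * r₂ ^ (n + 1)) := by
      simpa [pow_succ, mul_assoc] using
        (((summable_geometric_of_lt_one hr₂0 hr₂1).mul_right r₂).mul_left ((s:ℝ) - 1))
    have hle := Summable.tsum_le_tsum hlb hg2 hsum
    have heq : ∑' n : ℕ, ((s:ℝ) - 1) * r₂ ^ (n + 1)
        = ((s : ℝ) - 1) / ((s : ℝ) ^ (s - 1) - 1) := by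
      have : ∑' n : ℕ, ((s:ℝ) - 1) * r₂ ^ (n + 1)
          = ((s:ℝ) - 1) * ((1 - r₂)⁻¹ * r₂) := by
        simp only [pow_succ]
        rw [tsum_mul_left]
        rw [tsum_mul_right, tsum_geometric_of_lt_one hr₂0 hr₂1]
      rw [this, hr₂]
      have h1 : (s:ℝ) ^ (s - 1) ≠ 0 := by positivity
      have h2 : (s:ℝ) ^ (s - 1) - 1 ≠ 0 := by nlinarith
      field_simp
    rw [sVal]
    rw [heq] at hle
    exact hle
  · -- upper bound
    have hle := Summable.tsum_le_tsum hub hsum hg1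
    have heq : ∑' n : ℕ, r₁ ^ (n + 1) = 1 / ((s : ℝ) - 1) := by
      have : ∑' n : ℕ, r₁ ^ (n + 1) = (1 - r₁)⁻¹ * r₁ := by
        simp only [pow_succ]
        rw [tsum_mul_right, tsum_geometric_of_lt_one hr₁0 hr₁1]
      rw [this, hr₁]
      have h1 : (s:ℝ) ≠ 0 := by positivity
      have h2 : (s:ℝ) - 1 ≠ 0 := by nlinarith
      field_simp
    rw [sVal]
    rw [heq] at hle
    exact hle
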